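/- If x is feasible for {Dx = d, 0 ≤ x ≤ u, x ∈ ℤ^n} and y is another feasible point, then y − x decomposes as a sign-compatible sum of Graver basis elements g_t of D, and each partial point x + g_t is again feasible (satisfies Dx = d and the bounds 0 ≤ x + g_t ≤ u). -/

import Mathlib

/-- `z` is a Graver basis element of `D`: a nonzero integer kernel element of `D` that is
not the sum of two nonzero sign-compatible integer kernel elements. -/
def InGraver {κ ι : Type*} [Fintype κ] [Fintype ι] (D : Matrix κ ι ℤ) (z : ι → ℤ) : Prop :=
  z ≠ 0 ∧ D.mulVec z = 0 ∧
    ¬ ∃ u v : ι → ℤ, u ≠ 0 ∧ v ≠ 0 ∧ D.mulVec u = 0 ∧ D.mulVec v = 0 ∧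
      (∀ j, 0 ≤ u j * v j) ∧ z = u + v

/-- Feasibility for the integer program `Dx = d`, `0 ≤ x ≤ u`. -/
def Feas {dd n : ℕ} (D : Matrix (Fin dd) (Fin n) ℤ) (dv : Fin dd → ℤ)
    (u : Fin n → ℤ) (x : Fin n → ℤ) : Prop :=
  D.mulVec x = dv ∧ ∀ j, 0 ≤ x j ∧ x j ≤ u j

lemma natAbs_add_eq_aux (a b : ℤ) (h : 0 ≤ a * b) :
    (a + b).natAbs = a.natAbs + b.natAbs := by
  rcases le_or_gt 0 a with ha | ha <;> rcases le_or_gt 0 b with hb | hb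
  · omega
  · have h0 : a * b ≤ 0 := mul_nonpos_of_nonneg_of_nonpos ha hb.le
    rcases mul_eq_zero.mp (le_antisymm h0 h) with h1 | h1 <;> omega
  · have h0 : a * b ≤ 0 := mul_nonpos_of_nonpos_of_nonneg ha.le hb
    rcases mul_eq_zero.mp (le_antisymm h0 h) with h1 | h1 <;> omega
  · omega

lemma sign_trans_aux (g a b : ℤ) (h1 : 0 ≤ g * a) (h2 : 0 ≤ a * b)
    (h3 : g.natAbs ≤ a.natAbs) : 0 ≤ g * (a + b) := by
  rcases eq_or_ne g 0 with rfl | hg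
  · simp
  have ha : a ≠ 0 := by
    intro h; subst h; simp at h3; omega
  have ha2 : 0 < a * a := mul_self_pos.mpr ha
  nlinarith [mul_nonneg h1 h2]

lemma sandwich_aux (a z : ℤ) (h1 : 0 ≤ a * z) (h2 : a.natAbs ≤ z.natAbs) :
    (0 ≤ a ∧ a ≤ z) ∨ (z ≤ a ∧ a ≤ 0) := by
  rcases lt_trichotomy a 0 with ha | ha | ha
  · have hz : z ≤ 0 := by nlinarith
    right; omega
  · omega
  · have hz : 0 ≤ z := by nlinarith
    left; omega

lemma graver_decomp {dd n : ℕ} (D : Matrix (Fin dd) (Fin n) ℤ) :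
    ∀ N : ℕ, ∀ z : Fin n → ℤ, (∑ j, (z j).natAbs) = N → D.mulVec z = 0 →
    ∃ (s : ℕ) (g : Fin s → Fin n → ℤ),
      (∀ t, InGraver D (g t)) ∧ (∑ t, g t) = z ∧
      (∀ t j, 0 ≤ g t j * z j) ∧ (∀ t j, (g t j).natAbs ≤ (z j).natAbs) := by
  intro N
  induction N using Nat.strong_induction_on with
  | _ N ih =>
    intro z hN hz
    by_cases hz0 : z = 0
    · refine ⟨0, Fin.elim0, fun t => t.elim0, ?_, fun t => t.elim0, fun t => t.elim0⟩
      simp [hz0]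
    by_cases hgr : InGraver D z
    · exact ⟨1, fun _ => z, fun _ => hgr, by simp,
        fun t j => mul_self_nonneg _, fun t j => le_refl _⟩
    have hex : ∃ a b : Fin n → ℤ, a ≠ 0 ∧ b ≠ 0 ∧ D.mulVec a = 0 ∧ D.mulVec b = 0 ∧
        (∀ j, 0 ≤ a j * b j) ∧ z = a + b := by
      by_contra hne
      exact hgr ⟨hz0, hz, hne⟩
    obtain ⟨a, b, ha0, hb0, hDa, hDb, hsign, hsum⟩ := hex
    have habs : ∀ j, (z j).natAbs = (a j).natAbs + (b j).natAbs := by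
      intro j
      have : z j = a j + b j := by rw [hsum]; rfl
      rw [this]
      exact natAbs_add_eq_aux (a j) (b j) (hsign j)
    have hNsplit : (∑ j, (a j).natAbs) + (∑ j, (b j).natAbs) = N := by
      rw [← hN, ← Finset.sum_add_distrib]
      exact Finset.sum_congr rfl fun j _ => (habs j).symm
    obtain ⟨ja, hja⟩ := Function.ne_iff.mp ha0
    obtain ⟨jb, hjb⟩ := Function.ne_iff.mp hb0
    have hpa : 0 < ∑ j, (a j).natAbs := by
      have h1 : (a ja).natAbs ≤ ∑ j, (a j).natAbs :=
        Finset.single_le_sum (f := fun j => (a j).natAbs) (fun j _ => Nat.zero_le _) (Finset.mem_univ ja)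
      have : (a ja).natAbs ≠ 0 := fun h => hja (Int.natAbs_eq_zero.mp h)
      omega
    have hpb : 0 < ∑ j, (b j).natAbs := by
      have h1 : (b jb).natAbs ≤ ∑ j, (b j).natAbs :=
        Finset.single_le_sum (f := fun j => (b j).natAbs) (fun j _ => Nat.zero_le _) (Finset.mem_univ jb)
      have : (b jb).natAbs ≠ 0 := fun h => hjb (Int.natAbs_eq_zero.mp h)
      omega
    obtain ⟨s1, g1, hG1, hS1, hsgn1, hle1⟩ :=
      ih (∑ j, (a j).natAbs) (by omega) a rfl hDa
    obtain ⟨s2, g2, hG2, hS2, hsgn2, hle2⟩ :=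
      ih (∑ j, (b j).natAbs) (by omega) b rfl hDb
    refine ⟨s1 + s2, Fin.append g1 g2, ?_, ?_, ?_, ?_⟩
    · intro t
      refine Fin.addCases (fun i => ?_) (fun i => ?_) t
      · simpa [Fin.append_left] using hG1 i
      · simpa [Fin.append_right] using hG2 i
    · rw [Fin.sum_univ_add]
      simp only [Fin.append_left, Fin.append_right]
      rw [hS1, hS2, hsum]
    · intro t j
      have hzj : z j = a j + b j := by rw [hsum]; rfl
      rw [hzj]
      refine Fin.addCases (fun i => ?_) (fun i => ?_) t
      · rw [Fin.append_left]
        exact sign_trans_aux _ _ _ (hsgn1 i j) (hsign j) (hle1 i j)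
      · rw [Fin.append_right]
        have := sign_trans_aux (g2 i j) (b j) (a j) (hsgn2 i j)
          (by nlinarith [hsign j]) (hle2 i j)
        linarith [this, show g2 i j * (b j + a j) = g2 i j * (a j + b j) by ring]
    · intro t j
      refine Fin.addCases (fun i => ?_) (fun i => ?_) t
      · rw [Fin.append_left]
        have := hle1 i j
        have := habs j
        omega
      · rw [Fin.append_right]
        have := hle2 i j
        have := habs j
        omega

/-- For feasible `x` and `y`, the difference `y - x` has a sign-compatible Graver
decomposition whose single steps `x + gₜ` are all feasible. -/
theorem feasible_difference_graver_decomposition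
    (dd n : ℕ) (D : Matrix (Fin dd) (Fin n) ℤ) (dv : Fin dd → ℤ) (u : Fin n → ℤ)
    (x y : Fin n → ℤ) (hx : Feas D dv u x) (hy : Feas D dv u y) :
    ∃ (s : ℕ) (g : Fin s → Fin n → ℤ),
      (∀ t, InGraver D (g t)) ∧ (∑ t, g t) = y - x ∧
      (∀ t j, 0 ≤ g t j * (y j - x j)) ∧
      ∀ t, Feas D dv u (x + g t) := by
  have hker : D.mulVec (y - x) = 0 := by
    rw [Matrix.mulVec_sub, hx.1, hy.1, sub_self]
  obtain ⟨s, g, hG, hS, hsgn, hle⟩ := graver_decomp D _ (y - x) rfl hker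
  refine ⟨s, g, hG, hS, fun t j => by simpa using hsgn t j, fun t => ?_⟩
  constructor
  · rw [Matrix.mulVec_add, hx.1, (hG t).2.1, add_zero]
  · intro j
    have hs := hsgn t j
    have hl := hle t j
    simp only [Pi.sub_apply] at hs hl
    have := sandwich_aux (g t j) (y j - x j) hs hl
    have hxj := hx.2 j
    have hyj := hy.2 j
    simp only [Pi.add_apply]
    rcases this with ⟨h1, h2⟩ | ⟨h1, h2⟩ <;> omega
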